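/- Multi-sample leave-one-out control variates have zero mean against the score: ∑_{(c_1,…,c_n) ∈ C^n} (∏_{i=1}^n π θ₀ c_i) * ∑_{i=1}^n ṽ_i * sc c_i = 0, where ṽ_i = log ( (1/(n−1)) * ∑_{j ≠ i} κ θ₀ c_j a* ). -/

import Mathlib

/-- Multi-sample leave-one-out control variates have zero mean against the score:
`∑_{c₁,…,cₙ} (∏ i, π θ₀ cᵢ) * ∑ i, ṽ i * sc cᵢ = 0`, where
`ṽ i = log ((1/(n-1)) * ∑_{j ≠ i} κ θ₀ cⱼ a*)` and
`sc c = deriv (fun θ => log (π θ c)) θ₀`. -/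
theorem multi_sample_control_variate_zero_mean
    {C A : Type*} [Fintype C] [Fintype A] [Nonempty C] [Nonempty A]
    (θ₀ : ℝ) (astar : A)
    (π : ℝ → C → ℝ) (κ : ℝ → C → A → ℝ)
    (hπ0 : ∀ θ c, 0 ≤ π θ c) (hπ1 : ∀ θ, ∑ c, π θ c = 1)
    (hκ0 : ∀ θ c a, 0 ≤ κ θ c a) (hκ1 : ∀ θ c, ∑ a, κ θ c a = 1)
    (hπpos : ∀ c, 0 < π θ₀ c) (hκpos : ∀ c a, 0 < κ θ₀ c a)
    (hπdiff : ∀ c, DifferentiableAt ℝ (fun θ => π θ c) θ₀)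
    (hκdiff : ∀ c a, DifferentiableAt ℝ (fun θ => κ θ c a) θ₀)
    (n : ℕ) (hn : 2 ≤ n) :
    ∑ cs : Fin n → C,
        (∏ i, π θ₀ (cs i)) *
          ∑ i,
            Real.log ((1 / ((n : ℝ) - 1)) * ∑ j ∈ Finset.univ.erase i, κ θ₀ (cs j) astar) *
              deriv (fun θ => Real.log (π θ (cs i))) θ₀ = 0 := by
  classical
  have hscore : ∑ c, π θ₀ c * deriv (fun θ => Real.log (π θ c)) θ₀ = 0 := by
    have hd : ∀ c, deriv (fun θ => Real.log (π θ c)) θ₀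
        = deriv (fun θ => π θ c) θ₀ / π θ₀ c := fun c =>
      (((hπdiff c).hasDerivAt).log (hπpos c).ne').deriv
    have hsum : HasDerivAt (fun θ => ∑ c, π θ c) (∑ c, deriv (fun θ => π θ c) θ₀) θ₀ :=
      HasDerivAt.fun_sum fun c _ => ((hπdiff c).hasDerivAt)
    have h1 : (fun θ => ∑ c, π θ c) = fun _ => (1 : ℝ) := funext hπ1
    have h0 : ∑ c, deriv (fun θ => π θ c) θ₀ = 0 := by
      rw [h1] at hsum
      exact hsum.unique (hasDerivAt_const θ₀ 1)
    calc ∑ c, π θ₀ c * deriv (fun θ => Real.log (π θ c)) θ₀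
        = ∑ c, deriv (fun θ => π θ c) θ₀ := by
          refine Finset.sum_congr rfl fun c _ => ?_
          have hne := (hπpos c).ne'
          rw [hd c]
          field_simp
      _ = 0 := h0
  rw [Finset.sum_congr rfl fun cs _ => Finset.mul_sum
    Finset.univ (fun i => Real.log ((1 / ((n : ℝ) - 1)) *
      ∑ j ∈ Finset.univ.erase i, κ θ₀ (cs j) astar) *
        deriv (fun θ => Real.log (π θ (cs i))) θ₀) (∏ i, π θ₀ (cs i))]
  rw [Finset.sum_comm]
  refine Finset.sum_eq_zero fun i _ => ?_
  set e := Equiv.piSplitAt i (fun _ : Fin n => C) with he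
  rw [← Equiv.sum_comp e.symm, Fintype.sum_prod_type]
  have hcsi : ∀ (x : C) (f : {j : Fin n // j ≠ i} → C), (e.symm (x, f)) i = x := by
    intro x f
    exact congrArg Prod.fst (e.apply_symm_apply (x, f))
  have hcsj : ∀ (x : C) (f : {j : Fin n // j ≠ i} → C) (j : Fin n) (hj : j ≠ i),
      (e.symm (x, f)) j = f ⟨j, hj⟩ := by
    intro x f j hj
    exact congrFun (congrArg Prod.snd (e.apply_symm_apply (x, f))) ⟨j, hj⟩
  have hterm : ∀ (x : C) (f : {j : Fin n // j ≠ i} → C),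
      (∏ j, π θ₀ ((e.symm (x, f)) j)) *
        (Real.log ((1 / ((n : ℝ) - 1)) *
            ∑ j ∈ Finset.univ.erase i, κ θ₀ ((e.symm (x, f)) j) astar) *
          deriv (fun θ => Real.log (π θ ((e.symm (x, f)) i))) θ₀)
      = (π θ₀ x * deriv (fun θ => Real.log (π θ x)) θ₀) *
        ((∏ j : {j : Fin n // j ≠ i}, π θ₀ (f j)) *
          Real.log ((1 / ((n : ℝ) - 1)) * ∑ j : {j : Fin n // j ≠ i}, κ θ₀ (f j) astar)) := by
    intro x f
    have hp : (∏ j, π θ₀ ((e.symm (x, f)) j))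
        = π θ₀ x * ∏ j : {j : Fin n // j ≠ i}, π θ₀ (f j) := by
      rw [← Finset.mul_prod_erase Finset.univ _ (Finset.mem_univ i), hcsi]
      congr 1
      rw [Finset.prod_subtype (p := fun j => j ≠ i) (Finset.univ.erase i)
        (fun j => by simp [Finset.mem_erase]) (fun j => π θ₀ ((e.symm (x, f)) j))]
      exact Finset.prod_congr rfl fun j _ => by rw [hcsj x f j.1 j.2]
    have hk : (∑ j ∈ Finset.univ.erase i, κ θ₀ ((e.symm (x, f)) j) astar)
        = ∑ j : {j : Fin n // j ≠ i}, κ θ₀ (f j) astar := by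
      rw [Finset.sum_subtype (p := fun j => j ≠ i) (Finset.univ.erase i)
        (fun j => by simp [Finset.mem_erase]) (fun j => κ θ₀ ((e.symm (x, f)) j) astar)]
      exact Finset.sum_congr rfl fun j _ => by rw [hcsj x f j.1 j.2]
    rw [hp, hcsi, hk]
    ring
  calc ∑ x : C, ∑ f : {j : Fin n // j ≠ i} → C,
        (∏ j, π θ₀ ((e.symm (x, f)) j)) *
          (Real.log ((1 / ((n : ℝ) - 1)) *
              ∑ j ∈ Finset.univ.erase i, κ θ₀ ((e.symm (x, f)) j) astar) *
            deriv (fun θ => Real.log (π θ ((e.symm (x, f)) i))) θ₀)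
      = ∑ x : C, ∑ f : {j : Fin n // j ≠ i} → C,
          (π θ₀ x * deriv (fun θ => Real.log (π θ x)) θ₀) *
            ((∏ j : {j : Fin n // j ≠ i}, π θ₀ (f j)) *
              Real.log ((1 / ((n : ℝ) - 1)) *
                ∑ j : {j : Fin n // j ≠ i}, κ θ₀ (f j) astar)) := by
        exact Finset.sum_congr rfl fun x _ => Finset.sum_congr rfl fun f _ => hterm x f
    _ = (∑ x : C, π θ₀ x * deriv (fun θ => Real.log (π θ x)) θ₀) *
          (∑ f : {j : Fin n // j ≠ i} → C,
            (∏ j : {j : Fin n // j ≠ i}, π θ₀ (f j)) *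
              Real.log ((1 / ((n : ℝ) - 1)) *
                ∑ j : {j : Fin n // j ≠ i}, κ θ₀ (f j) astar)) := by
        rw [Finset.sum_mul_sum]
    _ = 0 := by rw [hscore, zero_mul]
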